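/- Let t be a PCF program (a closed term of PCF type Nat) and let C = (t,ε,ε). Then for every configuration D = (u,ρ,ξ) with C →* D and every term v occurring in the environment ρ or in the stack ξ, |v| ≤ |t|. -/

import Mathlib

set_option maxHeartbeats 1000000

namespace DlPCF

/-- An equational program over a signature: a finite-support interpretation of the
function symbols as partial functions over ℕ, where the distinguished symbols
`0`, `1`, `+`, `∸` are interpreted in the standard way. -/
structure EqProgram (F : Type) where
  interp : F → List ℕ → Option ℕ
  zeroS : F
  oneS : F
  addS : F
  subS : F
  interp_zero : interp zeroS [] = some 0
  interp_one : interp oneS [] = some 1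
  interp_add : ∀ m n : ℕ, interp addS [m, n] = some (m + n)
  interp_sub : ∀ m n : ℕ, interp subS [m, n] = some (m - n)

/-- Index terms: variables, applications of function symbols, bounded sums
`Σ_{a<I} J` and forest cardinalities `⊲ᵃ(I,J,K)`. -/
inductive IndexTerm (F : Type) : Type where
  | var : ℕ → IndexTerm F
  | app : F → List (IndexTerm F) → IndexTerm F
  | bsum : ℕ → IndexTerm F → IndexTerm F → IndexTerm F
  | fcard : ℕ → IndexTerm F → IndexTerm F → IndexTerm F → IndexTerm F

namespace IndexTerm

variable {F : Type}

/-- Substitution of an index term for an index variable (not entering binders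
that rebind the variable). -/
def subst (a : ℕ) (u : IndexTerm F) : IndexTerm F → IndexTerm F
  | var b => if b = a then u else var b
  | app f args => app f (args.attach.map fun x => subst a u x.1)
  | bsum b I J => bsum b (subst a u I) (if b = a then J else subst a u J)
  | fcard b I J K => fcard b (subst a u I) (subst a u J) (if b = a then K else subst a u K)
  termination_by t => sizeOf t
  decreasing_by all_goals simp_wf <;> first
    | omega
    | (have := List.sizeOf_lt_of_mem x.2; omega)

/-- Free index variables. -/
def fv : IndexTerm F → Finset ℕ
  | var b => {b}
  | app _ args => (args.attach.map fun x => fv x.1).foldr (· ∪ ·) ∅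
  | bsum b I J => fv I ∪ (fv J).erase b
  | fcard b I J K => fv I ∪ fv J ∪ (fv K).erase b
  termination_by t => sizeOf t
  decreasing_by all_goals simp_wf <;> first
    | omega
    | (have := List.sizeOf_lt_of_mem x.2; omega)

/-- Bound index variables. -/
def bv : IndexTerm F → Finset ℕ
  | var _ => ∅
  | app _ args => (args.attach.map fun x => bv x.1).foldr (· ∪ ·) ∅
  | bsum b I J => insert b (bv I ∪ bv J)
  | fcard b I J K => insert b (bv I ∪ bv J ∪ bv K)
  termination_by t => sizeOf t
  decreasing_by all_goals simp_wf <;> first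
    | omega
    | (have := List.sizeOf_lt_of_mem x.2; omega)

end IndexTerm

variable {F : Type}

/-- The index term `0`. -/
def EqProgram.zero (E : EqProgram F) : IndexTerm F := .app E.zeroS []

/-- The index term `1`. -/
def EqProgram.one (E : EqProgram F) : IndexTerm F := .app E.oneS []

/-- Sum of index terms. -/
def EqProgram.add (E : EqProgram F) (I J : IndexTerm F) : IndexTerm F := .app E.addS [I, J]

/-- Truncated difference of index terms. -/
def EqProgram.sub (E : EqProgram F) (I J : IndexTerm F) : IndexTerm F := .app E.subS [I, J]

/-- Numeral index terms. -/
def EqProgram.lit (E : EqProgram F) : ℕ → IndexTerm F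
  | 0 => E.zero
  | n + 1 => E.add (E.lit n) E.one

mutual
  /-- Partial semantics of index terms: `Sem E ρ I n` means `⟦I⟧_ρ^E = n`
  (definedness is expressed as existence of a value). It is the least relation
  closed under the defining equations; in particular forest cardinalities are
  interpreted by the least solution of their defining equations. -/
  inductive Sem {F : Type} (E : EqProgram F) : (ℕ → ℕ) → IndexTerm F → ℕ → Prop where
    | var : ∀ ρ a, Sem E ρ (.var a) (ρ a)
    | app : ∀ ρ f args vals n, SemList E ρ args vals → E.interp f vals = some n →
        Sem E ρ (.app f args) n
    | bsum : ∀ (ρ : ℕ → ℕ) a I J k (vs : ℕ → ℕ), Sem E ρ I k →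
        (∀ i, i < k → Sem E (Function.update ρ a i) J (vs i)) →
        Sem E ρ (.bsum a I J) (∑ i ∈ Finset.range k, vs i)
    | fcardZero : ∀ ρ a I J K, Sem E ρ J 0 → Sem E ρ (.fcard a I J K) 0
    | fcardSucc : ∀ ρ a I J K i j n, Sem E ρ I i → Sem E ρ J j →
        FSem E ρ a i j K n → Sem E ρ (.fcard a I J K) n

  /-- Pointwise semantics on lists of index terms. -/
  inductive SemList {F : Type} (E : EqProgram F) :
      (ℕ → ℕ) → List (IndexTerm F) → List ℕ → Prop where
    | nil : ∀ ρ, SemList E ρ [] []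
    | cons : ∀ ρ I Is n ns, Sem E ρ I n → SemList E ρ Is ns →
        SemList E ρ (I :: Is) (n :: ns)

  /-- `FSem E ρ a i j K n`: the forest of `j` trees whose nodes are indexed in
  pre-order starting from `i`, the number of children of node `m` being the value
  of `K` with `a := m`, has exactly `n` nodes. -/
  inductive FSem {F : Type} (E : EqProgram F) :
      (ℕ → ℕ) → ℕ → ℕ → ℕ → IndexTerm F → ℕ → Prop where
    | zero : ∀ ρ a i K, FSem E ρ a i 0 K 0
    | succ : ∀ (ρ : ℕ → ℕ) a i j K m c p,
        FSem E ρ a i j K m →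
        Sem E (Function.update ρ a (i + m)) K c →
        FSem E ρ a (i + 1 + m) c K p →
        FSem E ρ a i (j + 1) K (m + 1 + p)
end

/-- A constraint `I ≤ J` between index terms. -/
def Constr (F : Type) : Type := IndexTerm F × IndexTerm F

/-- Substitution on constraints. -/
def Constr.substC (c : Constr F) (a : ℕ) (u : IndexTerm F) : Constr F :=
  (c.1.subst a u, c.2.subst a u)

/-- Truth of a constraint under an assignment (both sides defined and `≤`). -/
def constrHolds (E : EqProgram F) (ρ : ℕ → ℕ) (c : Constr F) : Prop :=
  ∃ m n, Sem E ρ c.1 m ∧ Sem E ρ c.2 n ∧ m ≤ n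

/-- Truth of a set of constraints. -/
def holdsAll (E : EqProgram F) (ρ : ℕ → ℕ) (Φ : List (Constr F)) : Prop :=
  ∀ c ∈ Φ, constrHolds E ρ c

/-- `Φ ⊨^E I ≤ J`. -/
def entailsLe (E : EqProgram F) (Φ : List (Constr F)) (I J : IndexTerm F) : Prop :=
  ∀ ρ, holdsAll E ρ Φ → ∃ m n, Sem E ρ I m ∧ Sem E ρ J n ∧ m ≤ n

/-- `Φ ⊨^E I = J`. -/
def entailsEq (E : EqProgram F) (Φ : List (Constr F)) (I J : IndexTerm F) : Prop :=
  ∀ ρ, holdsAll E ρ Φ → ∃ n, Sem E ρ I n ∧ Sem E ρ J n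

/-- `Φ ⊨^E I < J`. -/
def entailsLt (E : EqProgram F) (Φ : List (Constr F)) (I J : IndexTerm F) : Prop :=
  ∀ ρ, holdsAll E ρ Φ → ∃ m n, Sem E ρ I m ∧ Sem E ρ J n ∧ m < n

/-- `Φ ⊨^E I ≃ J` (Kleene equality under all assignments satisfying `Φ`). -/
def entailsKleene (E : EqProgram F) (Φ : List (Constr F)) (I J : IndexTerm F) : Prop :=
  ∀ ρ, holdsAll E ρ Φ → ∀ n, Sem E ρ I n ↔ Sem E ρ J n

/-- Comparison used in the premises of typing rules: in precise derivations
(`pr = true`) all the `≤` premises must hold with equality. -/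
def cmpLe (E : EqProgram F) (pr : Bool) (Φ : List (Constr F)) (I J : IndexTerm F) : Prop :=
  if pr then entailsEq E Φ I J else entailsLe E Φ I J

/-- The constraint `a < I`. -/
def cLT (E : EqProgram F) (a : ℕ) (I : IndexTerm F) : Constr F := (E.add (.var a) E.one, I)

/-- The constraint `I ≤ 0`. -/
def cLE0 (E : EqProgram F) (I : IndexTerm F) : Constr F := (I, E.zero)

/-- The constraint `I ≥ 1`. -/
def cGE1 (E : EqProgram F) (I : IndexTerm F) : Constr F := (E.one, I)

/-! ### PCF -/

/-- PCF terms, with de Bruijn indices for term variables. -/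
inductive Term : Type where
  | var : ℕ → Term
  | lit : ℕ → Term
  | succ : Term → Term
  | pred : Term → Term
  | lam : Term → Term
  | app : Term → Term → Term
  | ifz : Term → Term → Term → Term
  | fix : Term → Term

namespace Term

/-- Shifting of de Bruijn indices (variables `≥ c` are incremented). -/
def shift (c : ℕ) : Term → Term
  | var n => if n < c then var n else var (n + 1)
  | lit n => lit n
  | succ t => succ (shift c t)
  | pred t => pred (shift c t)
  | lam t => lam (shift (c + 1) t)
  | app t u => app (shift c t) (shift c u)
  | ifz t u v => ifz (shift c t) (shift c u) (shift c v)
  | fix t => fix (shift (c + 1) t)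

/-- Capture-avoiding substitution `t[x_k := u]`. -/
def subst (k : ℕ) (u : Term) : Term → Term
  | var n => if n < k then var n else if n = k then u else var (n - 1)
  | lit n => lit n
  | succ t => succ (subst k u t)
  | pred t => pred (subst k u t)
  | lam t => lam (subst (k + 1) (shift 0 u) t)
  | app t v => app (subst k u t) (subst k u v)
  | ifz t v w => ifz (subst k u t) (subst k u v) (subst k u w)
  | fix t => fix (subst (k + 1) (shift 0 u) t)

/-- Size of a term. -/
def size : Term → ℕ
  | var _ => 1
  | lit _ => 1
  | succ t => t.size + 2
  | pred t => t.size + 2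
  | lam t => t.size + 1
  | app t u => t.size + u.size + 1
  | ifz t u v => t.size + u.size + v.size + 1
  | fix t => t.size + 1

end Term

/-- Weak-head reduction of PCF terms. -/
inductive Whr : Term → Term → Prop where
  | beta : ∀ t u, Whr (.app (.lam t) u) (t.subst 0 u)
  | succLit : ∀ n, Whr (.succ (.lit n)) (.lit (n + 1))
  | predSucc : ∀ n, Whr (.pred (.lit (n + 1))) (.lit n)
  | predZero : Whr (.pred (.lit 0)) (.lit 0)
  | ifzZero : ∀ u v, Whr (.ifz (.lit 0) u v) u
  | ifzSucc : ∀ n u v, Whr (.ifz (.lit (n + 1)) u v) v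
  | fix : ∀ t, Whr (.fix t) (t.subst 0 (.fix t))
  | succCtx : ∀ t u, Whr t u → Whr (.succ t) (.succ u)
  | predCtx : ∀ t u, Whr t u → Whr (.pred t) (.pred u)
  | appCtx : ∀ t v u, Whr t v → Whr (.app t u) (.app v u)
  | ifzCtx : ∀ t w u v, Whr t w → Whr (.ifz t u v) (.ifz w u v)

/-- Simple PCF types. -/
inductive PTy : Type where
  | nat : PTy
  | arr : PTy → PTy → PTy

/-- The standard PCF type system. -/
inductive PTyping : List PTy → Term → PTy → Prop where
  | var : ∀ Γ n σ, Γ[n]? = some σ → PTyping Γ (.var n) σ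
  | lit : ∀ Γ n, PTyping Γ (.lit n) .nat
  | succ : ∀ Γ t, PTyping Γ t .nat → PTyping Γ (.succ t) .nat
  | pred : ∀ Γ t, PTyping Γ t .nat → PTyping Γ (.pred t) .nat
  | lam : ∀ Γ σ τ t, PTyping (σ :: Γ) t τ → PTyping Γ (.lam t) (.arr σ τ)
  | app : ∀ Γ σ τ t u, PTyping Γ t (.arr σ τ) → PTyping Γ u σ → PTyping Γ (.app t u) τ
  | ifz : ∀ Γ σ t u v, PTyping Γ t .nat → PTyping Γ u σ → PTyping Γ v σ →
      PTyping Γ (.ifz t u v) σ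
  | fix : ∀ Γ σ t, PTyping (σ :: Γ) t σ → PTyping Γ (.fix t) σ

/-! ### dℓPCF types -/

mutual
  /-- Basic dℓPCF types: `Nat[I,J]` and `A ⊸ σ`. -/
  inductive BType (F : Type) : Type where
    | nat : IndexTerm F → IndexTerm F → BType F
    | arr : MType F → BType F → BType F

  /-- Modal dℓPCF types: `[a<I]σ`. -/
  inductive MType (F : Type) : Type where
    | box : ℕ → IndexTerm F → BType F → MType F
end

mutual
  /-- Substitution of an index term for an index variable in a basic type. -/
  def BType.isubst (a : ℕ) (u : IndexTerm F) : BType F → BType F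
    | .nat I J => .nat (I.subst a u) (J.subst a u)
    | .arr A σ => .arr (A.isubst a u) (σ.isubst a u)

  /-- Substitution of an index term for an index variable in a modal type. -/
  def MType.isubst (a : ℕ) (u : IndexTerm F) : MType F → MType F
    | .box b I σ => .box b (I.subst a u) (if b = a then σ else σ.isubst a u)
end

mutual
  /-- Erasure `⌊σ⌋` of a basic type to a PCF type. -/
  def BType.erase : BType F → PTy
    | .nat _ _ => .nat
    | .arr A σ => .arr A.erase σ.erase

  /-- Erasure of a modal type to a PCF type. -/
  def MType.erase : MType F → PTy
    | .box _ _ σ => σ.erase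
end

mutual
  /-- Subtyping of basic types.  When `pr = true` this is the "precise" version,
  where all semantic premises `I ≤ J` are required to hold as equalities (and hence
  the relation is the type equivalence `≅`). -/
  inductive Sub {F : Type} (E : EqProgram F) (pr : Bool) :
      List ℕ → List (Constr F) → BType F → BType F → Prop where
    | nat : ∀ φ Φ I J K H, cmpLe E pr Φ K I → cmpLe E pr Φ J H →
        Sub E pr φ Φ (.nat I J) (.nat K H)
    | arr : ∀ φ Φ A B σ τ, SubM E pr φ Φ B A → Sub E pr φ Φ σ τ →
        Sub E pr φ Φ (.arr A σ) (.arr B τ)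

  /-- Subtyping of modal types. -/
  inductive SubM {F : Type} (E : EqProgram F) (pr : Bool) :
      List ℕ → List (Constr F) → MType F → MType F → Prop where
    | box : ∀ φ Φ a I J σ τ,
        Sub E pr (a :: φ) (cLT E a I :: Φ) σ τ →
        cmpLe E pr Φ J I →
        SubM E pr φ Φ (.box a I σ) (.box a J τ)
end

/-- Well-definedness `φ;Φ ⊢ σ↓` of a basic type (sugar for `σ ⊑ σ`). -/
def BType.wd (E : EqProgram F) (pr : Bool) (φ : List ℕ) (Φ : List (Constr F))
    (σ : BType F) : Prop := Sub E pr φ Φ σ σ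

/-- Well-definedness of a modal type. -/
def MType.wd (E : EqProgram F) (pr : Bool) (φ : List ℕ) (Φ : List (Constr F))
    (A : MType F) : Prop := SubM E pr φ Φ A A

/-- Well-definedness of a typing context. -/
def CtxWD (E : EqProgram F) (pr : Bool) (φ : List ℕ) (Φ : List (Constr F))
    (Γ : List (MType F)) : Prop := ∀ A ∈ Γ, SubM E pr φ Φ A A

/-- Sum `A ⊎ B` of modal types: `A` consists of the first `I` instances of a type
`μ`, `B` of the next `J` instances, and the sum of the first `I+J` instances. -/
inductive MSum (E : EqProgram F) : MType F → MType F → MType F → Prop where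
  | mk : ∀ a b c I J μ,
      MSum E (.box a I (BType.isubst c (.var a) μ))
             (.box b J (BType.isubst c (E.add I (.var b)) μ))
             (.box c (E.add I J) μ)

/-- Bounded sum `Σ_{a<I} A` of a modal type. -/
inductive MBSum (E : EqProgram F) (a : ℕ) (I : IndexTerm F) : MType F → MType F → Prop where
  | mk : ∀ b c d J σ,
      MBSum E a I
        (.box b J (BType.isubst c
          (E.add (.bsum d (.var a) (J.subst a (.var d))) (.var b)) σ))
        (.box c (.bsum a I J) σ)

/-- Pointwise sum of typing contexts. -/
inductive CtxSum (E : EqProgram F) : List (MType F) → List (MType F) → List (MType F) → Prop where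
  | nil : CtxSum E [] [] []
  | cons : ∀ A B C Γ Δ Θ, MSum E A B C → CtxSum E Γ Δ Θ →
      CtxSum E (A :: Γ) (B :: Δ) (C :: Θ)

/-- Pointwise bounded sum of typing contexts. -/
def CtxBSum (E : EqProgram F) (a : ℕ) (I : IndexTerm F)
    (Γ Δ : List (MType F)) : Prop := List.Forall₂ (MBSum E a I) Γ Δ

/-- Pointwise subtyping of typing contexts. -/
def CtxSub (E : EqProgram F) (pr : Bool) (φ : List ℕ) (Φ : List (Constr F))
    (Γ Δ : List (MType F)) : Prop := List.Forall₂ (SubM E pr φ Φ) Γ Δ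

/-- The dℓPCF type system (Figure 5 of the paper).  The flag `pr` selects
precise derivations, in which all semantic premises `I ≤ J` must be equalities
and all subtyping premises must be equivalences. -/
inductive Typing {F : Type} (E : EqProgram F) (pr : Bool) :
    List ℕ → List (Constr F) → List (MType F) → IndexTerm F → Term → BType F → Prop where
  | var : ∀ φ Φ Γ n a I σ J τ,
      Γ[n]? = some (.box a I σ) →
      cmpLe E pr Φ E.zero J →
      cmpLe E pr Φ E.one I →
      Sub E pr φ Φ (σ.isubst a E.zero) τ →
      CtxWD E pr φ Φ Γ →
      Typing E pr φ Φ Γ J (.var n) τ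
  | lam : ∀ φ Φ Γ A J t τ,
      Typing E pr φ Φ (A :: Γ) J t τ →
      Typing E pr φ Φ Γ J (.lam t) (.arr A τ)
  | app : ∀ φ Φ Γ Δ Δs Θ Sc a I σ τ J K H t u,
      a ∉ φ →
      Typing E pr φ Φ Γ J t (.arr (.box a I σ) τ) →
      Typing E pr (a :: φ) (cLT E a I :: Φ) Δ K u σ →
      CtxBSum E a I Δ Δs →
      CtxSum E Γ Δs Θ →
      CtxSub E pr φ Φ Sc Θ →
      cmpLe E pr Φ (E.add J (E.add I (.bsum a I K))) H →
      Typing E pr φ Φ Sc H (.app t u) τ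
  | lit : ∀ φ Φ Γ K I J n,
      cmpLe E pr Φ E.zero K →
      cmpLe E pr Φ I (E.lit n) →
      cmpLe E pr Φ (E.lit n) J →
      CtxWD E pr φ Φ Γ →
      Typing E pr φ Φ Γ K (.lit n) (.nat I J)
  | succ : ∀ φ Φ Γ I J K H L t,
      Sub E pr φ Φ (.nat (E.add I E.one) (E.add J E.one)) (.nat K H) →
      Typing E pr φ Φ Γ L t (.nat I J) →
      Typing E pr φ Φ Γ L (.succ t) (.nat K H)
  | pred : ∀ φ Φ Γ I J K H L t,
      Sub E pr φ Φ (.nat (E.sub I E.one) (E.sub J E.one)) (.nat K H) →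
      Typing E pr φ Φ Γ L t (.nat I J) →
      Typing E pr φ Φ Γ L (.pred t) (.nat K H)
  | ifz : ∀ φ Φ Γ Δ Θ Sc I J K H L t u v σ,
      Typing E pr φ Φ Γ K t (.nat I J) →
      Typing E pr φ (cLE0 E I :: Φ) Δ H u σ →
      Typing E pr φ (cGE1 E J :: Φ) Δ H v σ →
      CtxSum E Γ Δ Θ →
      CtxSub E pr φ Φ Sc Θ →
      cmpLe E pr Φ (E.add K H) L →
      Typing E pr φ Φ Sc L (.ifz t u v) σ
  | fix : ∀ φ Φ Γ Γs Sc a b I K L M N σ τ μ t,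
      a ∉ φ → b ∉ φ → a ≠ b →
      Typing E pr (b :: φ) (cLT E b L :: Φ) (MType.box a I σ :: Γ) K t τ →
      Sub E pr φ Φ (τ.isubst b E.zero) μ →
      Sub E pr (a :: b :: φ) (cLT E a I :: cLT E b L :: Φ)
        (τ.isubst b (E.add (.fcard b (E.add (.var b) E.one) (.var a) I)
          (E.add (.var b) E.one))) σ →
      CtxBSum E b L Γ Γs →
      CtxSub E pr φ Φ Sc Γs →
      cmpLe E pr Φ (.fcard b E.zero E.one I) L →
      cmpLe E pr Φ (.fcard b E.zero E.one I) M →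
      cmpLe E pr Φ (E.add (E.sub M E.one) (.bsum b L K)) N →
      Typing E pr φ Φ Sc N (.fix t) μ

/-! ### The Krivine machine K_PCF -/

/-- Closures. -/
inductive Closure : Type where
  | mk : Term → List Closure → Closure

/-- Environments. -/
abbrev Env : Type := List Closure

/-- Stack elements. -/
inductive StackEl : Type where
  | cl : Closure → StackEl
  | s : StackEl
  | p : StackEl
  | br : Term → Term → Env → StackEl

/-- Stacks. -/
abbrev Stack : Type := List StackEl

/-- Machine configurations. -/
abbrev Conf : Type := Term × Env × Stack

/-- The transition relation of the machine K_PCF. -/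
inductive Step : Conf → Conf → Prop where
  | app : ∀ t u ρ ξ, Step (.app t u, ρ, ξ) (t, ρ, .cl (.mk u ρ) :: ξ)
  | lam : ∀ t ρ c ξ, Step (.lam t, ρ, .cl c :: ξ) (t, c :: ρ, ξ)
  | var : ∀ n (ρ : Env) t' ρ' ξ, ρ[n]? = some (.mk t' ρ') →
      Step (.var n, ρ, ξ) (t', ρ', ξ)
  | ifz : ∀ t u v ρ ξ, Step (.ifz t u v, ρ, ξ) (t, ρ, .br u v ρ :: ξ)
  | fix : ∀ t ρ ξ, Step (.fix t, ρ, ξ) (t, .mk (.fix t) ρ :: ρ, ξ)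
  | succLit : ∀ n ρ ξ, Step (.lit n, ρ, .s :: ξ) (.lit (n + 1), ρ, ξ)
  | predLit : ∀ n ρ ξ, Step (.lit n, ρ, .p :: ξ) (.lit (n - 1), ρ, ξ)
  | brZero : ∀ u v ρ μ ξ, Step (.lit 0, ρ, .br u v μ :: ξ) (u, μ, ξ)
  | brSucc : ∀ n u v ρ μ ξ, Step (.lit (n + 1), ρ, .br u v μ :: ξ) (v, μ, ξ)
  | succPush : ∀ t ρ ξ, Step (.succ t, ρ, ξ) (t, ρ, .s :: ξ)
  | predPush : ∀ t ρ ξ, Step (.pred t, ρ, ξ) (t, ρ, .p :: ξ)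

/-- `Steps n C D`: the machine goes from `C` to `D` in exactly `n` steps. -/
inductive Steps : ℕ → Conf → Conf → Prop where
  | refl : ∀ C, Steps 0 C C
  | step : ∀ n C D D', Step C D → Steps n D D' → Steps (n + 1) C D'

/-- `t ⇓ⁿ m`: evaluation of the program `t` to the numeral `m` in `n` steps. -/
def Eval (t : Term) (n m : ℕ) : Prop := ∃ ρ, Steps n (t, [], []) (.lit m, ρ, [])

/-- Size of a stack element. -/
def StackEl.size : StackEl → ℕ
  | .cl (.mk t _) => t.size
  | .s => 1
  | .p => 1
  | .br t u _ => t.size + u.size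

/-- Size of a stack. -/
def stackSize (ξ : Stack) : ℕ := (ξ.map StackEl.size).sum

/-- Size of a configuration. -/
def confSize (C : Conf) : ℕ := C.1.size + stackSize C.2.2

/-- A term occurs in a closure. -/
inductive InClos : Term → Closure → Prop where
  | head : ∀ t ρ, InClos t (.mk t ρ)
  | env : ∀ v t ρ c, c ∈ ρ → InClos v c → InClos v (.mk t ρ)

/-- A term occurs in an environment. -/
def InEnv (v : Term) (ρ : Env) : Prop := ∃ c ∈ ρ, InClos v c

/-- A term occurs in a stack element. -/
def InStackEl (v : Term) : StackEl → Prop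
  | .cl c => InClos v c
  | .s => False
  | .p => False
  | .br t u ρ => v = t ∨ v = u ∨ InEnv v ρ

/-- A term occurs in a stack. -/
def InStack (v : Term) (ξ : Stack) : Prop := ∃ e ∈ ξ, InStackEl v e

/-- Sum of a list of index terms. -/
def sumIdx (E : EqProgram F) : List (IndexTerm F) → IndexTerm F
  | [] => E.zero
  | I :: Is => E.add I (sumIdx E Is)

mutual
  /-- Lifting of dℓPCF typing to closures (Figure 6). -/
  inductive CTyping {F : Type} (E : EqProgram F) (pr : Bool) :
      List ℕ → List (Constr F) → Closure → BType F → IndexTerm F → Prop where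
    | mk : ∀ φ Φ t ρ σ a Is τs Hs K J,
        a ∉ φ →
        Typing E pr φ Φ (List.zipWith (fun I τ => MType.box a I τ) Is τs) K t σ →
        CTypings E pr φ Φ a ρ Is τs Hs →
        cmpLe E pr Φ (E.add K (E.add (sumIdx E Is)
          (sumIdx E (List.zipWith (fun I H => IndexTerm.bsum a I H) Is Hs)))) J →
        CTyping E pr φ Φ (.mk t ρ) σ J

  /-- Pointwise typing of the closures of an environment. -/
  inductive CTypings {F : Type} (E : EqProgram F) (pr : Bool) :
      List ℕ → List (Constr F) → ℕ → List Closure → List (IndexTerm F) →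
      List (BType F) → List (IndexTerm F) → Prop where
    | nil : ∀ φ Φ a, CTypings E pr φ Φ a [] [] [] []
    | cons : ∀ φ Φ a c ρ I Is τ τs H Hs,
        CTyping E pr (a :: φ) (cLT E a I :: Φ) c τ H →
        CTypings E pr φ Φ a ρ Is τs Hs →
        CTypings E pr φ Φ a (c :: ρ) (I :: Is) (τ :: τs) (H :: Hs)

  /-- Lifting of dℓPCF typing to stacks (Figure 6). -/
  inductive STyping {F : Type} (E : EqProgram F) (pr : Bool) :
      List ℕ → List (Constr F) → Stack → BType F → BType F → IndexTerm F → Prop where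
    | nil : ∀ φ Φ σ τ J, cmpLe E pr Φ E.zero J → Sub E pr φ Φ σ τ →
        STyping E pr φ Φ [] σ τ J
    | cl : ∀ φ Φ a I γ μ τ c θ K H J,
        CTyping E pr (a :: φ) (cLT E a I :: Φ) c γ K →
        STyping E pr φ Φ θ μ τ H →
        cmpLe E pr Φ (E.add H (E.add (.bsum a I K) I)) J →
        STyping E pr φ Φ (.cl c :: θ) (.arr (.box a I γ) μ) τ J
    | s : ∀ φ Φ θ I L K H τ J,
        STyping E pr φ Φ θ (.nat K H) τ J →
        Sub E pr φ Φ (.nat (E.add I E.one) (E.add L E.one)) (.nat K H) →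
        STyping E pr φ Φ (.s :: θ) (.nat I L) τ J
    | p : ∀ φ Φ θ I L K H τ J,
        STyping E pr φ Φ θ (.nat K H) τ J →
        Sub E pr φ Φ (.nat (E.sub I E.one) (E.sub L E.one)) (.nat K H) →
        STyping E pr φ Φ (.p :: θ) (.nat I L) τ J
    | br : ∀ φ Φ t u ρ θ I L μ τ K H J,
        CTyping E pr φ (cLE0 E I :: Φ) (.mk t ρ) μ K →
        CTyping E pr φ (cGE1 E L :: Φ) (.mk u ρ) μ K →
        STyping E pr φ Φ θ μ τ H →
        cmpLe E pr Φ (E.add K H) J →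
        STyping E pr φ Φ (.br t u ρ :: θ) (.nat I L) τ J
end

/-- Lifting of dℓPCF typing to configurations. -/
def KTyping (E : EqProgram F) (pr : Bool) (φ : List ℕ) (Φ : List (Constr F))
    (C : Conf) (τ : BType F) (I : IndexTerm F) : Prop :=
  ∃ σ K J, CTyping E pr φ Φ (.mk C.1 C.2.1) σ K ∧ STyping E pr φ Φ C.2.2 σ τ J ∧
    cmpLe E pr Φ (E.add K J) I

mutual
  /-- Lifting of PCF typing to closures (Figure 7). -/
  inductive PCTyping : Closure → PTy → Prop where
    | mk : ∀ t ρ τs σ, PTyping τs t σ → PCTypings ρ τs → PCTyping (.mk t ρ) σ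

  /-- Pointwise PCF typing of the closures of an environment. -/
  inductive PCTypings : List Closure → List PTy → Prop where
    | nil : PCTypings [] []
    | cons : ∀ c ρ τ τs, PCTyping c τ → PCTypings ρ τs → PCTypings (c :: ρ) (τ :: τs)

  /-- Lifting of PCF typing to stacks. -/
  inductive PSTyping : Stack → PTy → PTy → Prop where
    | nil : ∀ σ, PSTyping [] σ σ
    | cl : ∀ c γ μ τ θ, PCTyping c γ → PSTyping θ μ τ →
        PSTyping (.cl c :: θ) (.arr γ μ) τ
    | s : ∀ θ τ, PSTyping θ .nat τ → PSTyping (.s :: θ) .nat τ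
    | p : ∀ θ τ, PSTyping θ .nat τ → PSTyping (.p :: θ) .nat τ
    | br : ∀ t u ρ θ μ τ, PCTyping (.mk t ρ) μ → PCTyping (.mk u ρ) μ →
        PSTyping θ μ τ → PSTyping (.br t u ρ :: θ) .nat τ
end

/-- Lifting of PCF typing to configurations. -/
def PKTyping (C : Conf) (τ : PTy) : Prop :=
  ∃ σ, PCTyping (.mk C.1 C.2.1) σ ∧ PSTyping C.2.2 σ τ

/-- A universal equational program: every partial recursive function is the
semantics of some index term. -/
def Universal (E : EqProgram F) : Prop :=
  ∀ (k : ℕ) (f : List.Vector ℕ k →. ℕ), Nat.Partrec' f →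
    ∃ I : IndexTerm F, I.fv ⊆ Finset.range k ∧
      ∀ (v : List.Vector ℕ k) (ρ : ℕ → ℕ),
        (∀ i : Fin k, ρ i = v.get i) →
        ∀ m, Sem E ρ I m ↔ m ∈ f v

/-- Subterm relation on PCF terms (reflexive, transitive). -/
inductive IsSub : Term → Term → Prop where
  | refl : ∀ t, IsSub t t
  | succ : ∀ v t, IsSub v t → IsSub v (.succ t)
  | pred : ∀ v t, IsSub v t → IsSub v (.pred t)
  | lam : ∀ v t, IsSub v t → IsSub v (.lam t)
  | appL : ∀ v t u, IsSub v t → IsSub v (.app t u)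
  | appR : ∀ v t u, IsSub v u → IsSub v (.app t u)
  | ifz1 : ∀ v t u w, IsSub v t → IsSub v (.ifz t u w)
  | ifz2 : ∀ v t u w, IsSub v u → IsSub v (.ifz t u w)
  | ifz3 : ∀ v t u w, IsSub v w → IsSub v (.ifz t u w)
  | fix : ∀ v t, IsSub v t → IsSub v (.fix t)

lemma IsSub.size_le {v t : Term} (h : IsSub v t) : v.size ≤ t.size := by
  induction h <;> simp [Term.size] at * <;> omega

lemma IsSub.trans {a b c : Term} (h1 : IsSub a b) (h2 : IsSub b c) : IsSub a c := by
  induction h2 with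
  | refl => exact h1
  | succ _ _ ih => exact .succ _ _ ih
  | pred _ _ ih => exact .pred _ _ ih
  | lam _ _ ih => exact .lam _ _ ih
  | appL _ _ _ ih => exact .appL _ _ _ ih
  | appR _ _ _ ih => exact .appR _ _ _ ih
  | ifz1 _ _ _ _ ih => exact .ifz1 _ _ _ _ ih
  | ifz2 _ _ _ _ ih => exact .ifz2 _ _ _ _ ih
  | ifz3 _ _ _ _ ih => exact .ifz3 _ _ _ _ ih
  | fix _ _ ih => exact .fix _ _ ih

/-- Every term in a closure is a subterm of `t`. -/
def GoodC (t : Term) (c : Closure) : Prop := ∀ v, InClos v c → IsSub v t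

def GoodE (t : Term) (ρ : Env) : Prop := ∀ c ∈ ρ, GoodC t c

def GoodS (t : Term) : StackEl → Prop
  | .cl c => GoodC t c
  | .s => True
  | .p => True
  | .br a b μ => IsSub a t ∧ IsSub b t ∧ GoodE t μ

/-- Machine invariant: the head is a subterm of `t` or a numeral, and all
terms in the environment and the stack are subterms of `t`. -/
def Inv (t : Term) (C : Conf) : Prop :=
  (IsSub C.1 t ∨ ∃ n, C.1 = .lit n) ∧ GoodE t C.2.1 ∧ ∀ e ∈ C.2.2, GoodS t e

lemma goodC_mk {t u : Term} {ρ : Env} (h : IsSub u t) (he : GoodE t ρ) :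
    GoodC t (.mk u ρ) := by
  intro v hv
  cases hv with
  | head => exact h
  | env _ _ c hc hvc => exact he c hc _ hvc

lemma inv_step {t : Term} {C D : Conf} (h : Step C D) (hI : Inv t C) : Inv t D := by
  obtain ⟨h1, h2, h3⟩ := hI
  cases h with
  | app t1 u1 ρ ξ =>
    have hs : IsSub (Term.app t1 u1) t := by
      rcases h1 with h1 | ⟨n, hn⟩
      · exact h1
      · exact absurd hn (by simp)
    refine ⟨Or.inl (IsSub.trans (.appL _ _ _ (.refl _)) hs), h2, ?_⟩
    intro e he
    rcases List.mem_cons.mp he with rfl | he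
    · exact goodC_mk (IsSub.trans (.appR _ _ _ (.refl _)) hs) h2
    · exact h3 e he
  | lam t1 ρ c ξ =>
    have hs : IsSub (Term.lam t1) t := by
      rcases h1 with h1 | ⟨n, hn⟩
      · exact h1
      · exact absurd hn (by simp)
    refine ⟨Or.inl (IsSub.trans (.lam _ _ (.refl _)) hs), ?_, ?_⟩
    · intro c' hc'
      rcases List.mem_cons.mp hc' with rfl | hc'
      · exact h3 _ (List.mem_cons_self)
      · exact h2 c' hc'
    · intro e he; exact h3 e (List.mem_cons_of_mem _ he)
  | var n ρ t' ρ' ξ hn =>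
    have hmem : Closure.mk t' ρ' ∈ ρ := by
      obtain ⟨hlt, heq⟩ := List.getElem?_eq_some_iff.mp hn
      exact heq ▸ List.getElem_mem hlt
    have hc : GoodC t (.mk t' ρ') := h2 _ hmem
    refine ⟨Or.inl (hc t' (.head _ _)), ?_, h3⟩
    intro c' hc'
    intro v hv
    exact hc v (.env v t' ρ' c' hc' hv)
  | ifz t1 u1 v1 ρ ξ =>
    have hs : IsSub (Term.ifz t1 u1 v1) t := by
      rcases h1 with h1 | ⟨n, hn⟩
      · exact h1
      · exact absurd hn (by simp)
    refine ⟨Or.inl (IsSub.trans (.ifz1 _ _ _ _ (.refl _)) hs), h2, ?_⟩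
    intro e he
    rcases List.mem_cons.mp he with rfl | he
    · exact ⟨IsSub.trans (.ifz2 _ _ _ _ (.refl _)) hs,
        IsSub.trans (.ifz3 _ _ _ _ (.refl _)) hs, h2⟩
    · exact h3 e he
  | fix t1 ρ ξ =>
    have hs : IsSub (Term.fix t1) t := by
      rcases h1 with h1 | ⟨n, hn⟩
      · exact h1
      · exact absurd hn (by simp)
    refine ⟨Or.inl (IsSub.trans (.fix _ _ (.refl _)) hs), ?_, h3⟩
    intro c' hc'
    rcases List.mem_cons.mp hc' with rfl | hc'
    · exact goodC_mk hs h2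
    · exact h2 c' hc'
  | succLit n ρ ξ =>
    exact ⟨Or.inr ⟨_, rfl⟩, h2, fun e he => h3 e (List.mem_cons_of_mem _ he)⟩
  | predLit n ρ ξ =>
    exact ⟨Or.inr ⟨_, rfl⟩, h2, fun e he => h3 e (List.mem_cons_of_mem _ he)⟩
  | brZero u1 v1 ρ μ ξ =>
    obtain ⟨hu, hv, hμ⟩ := h3 _ (List.mem_cons_self)
    exact ⟨Or.inl hu, hμ, fun e he => h3 e (List.mem_cons_of_mem _ he)⟩
  | brSucc n u1 v1 ρ μ ξ =>
    obtain ⟨hu, hv, hμ⟩ := h3 _ (List.mem_cons_self)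
    exact ⟨Or.inl hv, hμ, fun e he => h3 e (List.mem_cons_of_mem _ he)⟩
  | succPush t1 ρ ξ =>
    have hs : IsSub (Term.succ t1) t := by
      rcases h1 with h1 | ⟨n, hn⟩
      · exact h1
      · exact absurd hn (by simp)
    refine ⟨Or.inl (IsSub.trans (.succ _ _ (.refl _)) hs), h2, ?_⟩
    intro e he
    rcases List.mem_cons.mp he with rfl | he
    · trivial
    · exact h3 e he
  | predPush t1 ρ ξ =>
    have hs : IsSub (Term.pred t1) t := by
      rcases h1 with h1 | ⟨n, hn⟩
      · exact h1
      · exact absurd hn (by simp)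
    refine ⟨Or.inl (IsSub.trans (.pred _ _ (.refl _)) hs), h2, ?_⟩
    intro e he
    rcases List.mem_cons.mp he with rfl | he
    · trivial
    · exact h3 e he

lemma inv_steps {t : Term} {n : ℕ} {C D : Conf} (h : Steps n C D) (hI : Inv t C) :
    Inv t D := by
  induction h with
  | refl C => exact hI
  | step n C D D' h1 _ ih => exact ih (inv_step h1 hI)

/-- Lemma 18 of the paper.  Let `t` be a PCF program and
`C = (t,ε,ε)`.  For every configuration `D = (u,ρ,ξ)` with `C →* D` and every
term `v` occurring in the environment `ρ` or in the stack `ξ`, `|v| ≤ |t|`. -/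
theorem size_bound_terms_km
    (t : Term) (hp : PTyping [] t .nat)
    (n : ℕ) (u : Term) (ρ : Env) (ξ : Stack)
    (h : Steps n (t, [], []) (u, ρ, ξ))
    (v : Term) (hv : InEnv v ρ ∨ InStack v ξ) :
    v.size ≤ t.size := by
  have hInit : Inv t (t, [], []) := ⟨Or.inl (.refl t), by simp [GoodE], by simp⟩
  obtain ⟨-, hE, hS⟩ := inv_steps h hInit
  rcases hv with ⟨c, hc, hvc⟩ | ⟨e, he, hve⟩
  · exact (hE c hc v hvc).size_le
  · have := hS e he
    cases e with
    | cl c => exact (this v hve).size_le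
    | s => exact absurd hve id
    | p => exact absurd hve id
    | br a b μ =>
      obtain ⟨ha, hb, hμ⟩ := this
      rcases hve with rfl | rfl | ⟨c, hc, hvc⟩
      · exact ha.size_le
      · exact hb.size_le
      · exact (hμ c hc v hvc).size_le

end DlPCF
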